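/- Let $n \ge 2$, $0 < p \le 1$, $\beta > 0$ with $p(n+\beta) > n$, and let $T$ be a sublinear operator bounded on $L^4(\mathbb{R}^n)$ such that for every $(p,\infty,s)$-atom $a$ supported in a ball $B(x_0, r)$ one has $|T a(x)| \le C \|a\|_{L^\infty} r^{n+\beta} |x - x_0|^{-(n+\beta)}$ for all $x \notin 64B$. Then there is a constant $C'$ such that $\|T a\|_{L^p(\mathbb{R}^n)} \le C'$ uniformly over all $(p,\infty,s)$-atoms $a$. -/

import Mathlib

open MeasureTheory Metric
open scoped ENNReal

private lemma my_rpow_ne_top {x : ℝ≥0∞} (hx : x ≠ 0) (hxt : x ≠ ⊤) (y : ℝ) : x ^ y ≠ ⊤ := by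
  rcases le_or_gt 0 y with h | h
  · exact ENNReal.rpow_ne_top_of_nonneg h hxt
  · simp [ENNReal.rpow_eq_top_iff, hx, hxt, h.not_gt, h]

lemma tail_bound {n : ℕ} (hn : 2 ≤ n) (x0 : EuclideanSpace ℝ (Fin n)) {R Q : ℝ}
    (hR : 0 < R) (hQ : (n : ℝ) < Q) :
    ∫⁻ x in (closedBall x0 R)ᶜ, ENNReal.ofReal (dist x x0 ^ (-Q)) ∂volume ≤
      ENNReal.ofReal (R ^ ((n : ℝ) - Q) * 2 ^ n) *
        volume (ball (0 : EuclideanSpace ℝ (Fin n)) 1) *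
        (1 - ENNReal.ofReal (2 ^ ((n : ℝ) - Q)))⁻¹ := by
  have hE : True := trivial
  set v1 := volume (ball (0 : EuclideanSpace ℝ (Fin n)) 1) with hv1
  set A : ℕ → Set (EuclideanSpace ℝ (Fin n)) := fun k => closedBall x0 (2 ^ (k + 1) * R) \ closedBall x0 (2 ^ k * R)
    with hA
  have hfr : Module.finrank ℝ (EuclideanSpace ℝ (Fin n)) = n := finrank_euclideanSpace_fin
  have hcover : (closedBall x0 R)ᶜ ⊆ ⋃ k, A k := by
    intro x hx
    simp only [Set.mem_compl_iff, mem_closedBall, not_le] at hx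
    have hPex : ∃ k : ℕ, dist x x0 ≤ 2 ^ (k + 1) * R := by
      obtain ⟨k, hk⟩ := exists_nat_gt (dist x x0 / R)
      refine ⟨k, ?_⟩
      have h1 : dist x x0 / R ≤ (k : ℝ) := hk.le
      have h2 : (k : ℝ) ≤ 2 ^ (k + 1) := by
        calc (k : ℝ) ≤ 2 ^ k := by exact_mod_cast (Nat.lt_two_pow_self (n := k)).le
        _ ≤ 2 ^ (k + 1) := by
          apply pow_le_pow_right₀ (by norm_num) (Nat.le_succ k)
      have := (div_le_iff₀ hR).mp h1
      nlinarith
    refine Set.mem_iUnion.2 ⟨Nat.find hPex, ?_, ?_⟩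
    · exact mem_closedBall.2 (Nat.find_spec hPex)
    · simp only [mem_closedBall, not_le]
      rcases Nat.eq_zero_or_pos (Nat.find hPex) with h0 | hpos
      · rw [h0]; simpa using hx
      · obtain ⟨j, hj⟩ := Nat.exists_eq_succ_of_ne_zero hpos.ne'
        rw [hj]
        have := Nat.find_min hPex (m := j) (by omega)
        push_neg at this
        simpa using this
  have h2pos : (0 : ℝ) < 2 := two_pos
  have hkey : ∀ k : ℕ, ∫⁻ x in A k, ENNReal.ofReal (dist x x0 ^ (-Q)) ∂volume ≤
      ENNReal.ofReal (R ^ ((n : ℝ) - Q) * 2 ^ n) * v1 *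
        ENNReal.ofReal (2 ^ ((n : ℝ) - Q)) ^ k := by
    intro k
    have hrk : (0 : ℝ) < 2 ^ k * R := by positivity
    have hbd : ∫⁻ x in A k, ENNReal.ofReal (dist x x0 ^ (-Q)) ∂volume ≤
        ∫⁻ _ in A k, ENNReal.ofReal ((2 ^ k * R) ^ (-Q)) ∂volume := by
      apply setLIntegral_mono' (by measurability) ?_
      intro x hx
      apply ENNReal.ofReal_le_ofReal
      apply Real.rpow_le_rpow_of_nonpos hrk ?_ (by linarith)
      have := hx.2
      simp only [mem_closedBall, not_le] at this
      exact this.le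
    have hvol : volume (A k) ≤ ENNReal.ofReal ((2 ^ (k + 1) * R) ^ n) * v1 := by
      calc volume (A k) ≤ volume (closedBall x0 (2 ^ (k + 1) * R)) :=
            measure_mono Set.diff_subset
      _ = ENNReal.ofReal ((2 ^ (k + 1) * R) ^ Module.finrank ℝ (EuclideanSpace ℝ (Fin n))) * v1 :=
            Measure.addHaar_closedBall volume x0 (by positivity)
      _ = _ := by rw [hfr]
    have e1 : ((2:ℝ) ^ k * R) ^ (-Q) = (2:ℝ) ^ ((k : ℝ) * (-Q)) * R ^ (-Q) := by
      rw [Real.mul_rpow (by positivity) hR.le, ← Real.rpow_natCast (2:ℝ) k,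
        ← Real.rpow_mul (by norm_num)]
    have e2 : ((2:ℝ) ^ (k + 1) * R) ^ n = (2:ℝ) ^ (((k:ℝ) + 1) * n) * R ^ (n:ℝ) := by
      rw [mul_pow, ← Real.rpow_natCast ((2:ℝ) ^ (k+1)) n, ← Real.rpow_natCast (2:ℝ) (k+1),
        ← Real.rpow_mul (by norm_num), ← Real.rpow_natCast R n]
      push_cast; ring_nf
    have e3 : ((2:ℝ) ^ ((n:ℝ) - Q)) ^ k = (2:ℝ) ^ (((n:ℝ) - Q) * k) := by
      rw [← Real.rpow_natCast ((2:ℝ) ^ ((n:ℝ) - Q)) k, ← Real.rpow_mul (by norm_num)]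
    have e4 : ((2:ℝ)) ^ n = (2:ℝ) ^ (n : ℝ) := (Real.rpow_natCast 2 n).symm
    have key : ((2:ℝ) ^ k * R) ^ (-Q) * ((2:ℝ) ^ (k + 1) * R) ^ n
        = R ^ ((n:ℝ) - Q) * 2 ^ n * ((2:ℝ) ^ ((n:ℝ) - Q)) ^ k := by
      rw [e1, e2, e3, e4, mul_mul_mul_comm, ← Real.rpow_add h2pos, ← Real.rpow_add hR,
        mul_assoc, ← Real.rpow_add h2pos, mul_comm]
      congr 1
      · congr 1; push_cast; ring
      · congr 1; push_cast; ring
    calc ∫⁻ x in A k, ENNReal.ofReal (dist x x0 ^ (-Q)) ∂volume ≤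
        ENNReal.ofReal ((2 ^ k * R) ^ (-Q)) * volume (A k) := by
          rw [setLIntegral_const] at hbd; exact hbd
      _ ≤ ENNReal.ofReal ((2 ^ k * R) ^ (-Q)) * (ENNReal.ofReal ((2 ^ (k + 1) * R) ^ n) * v1) :=
          mul_le_mul_right hvol _
      _ = ENNReal.ofReal ((2 ^ k * R) ^ (-Q) * (2 ^ (k + 1) * R) ^ n) * v1 := by
          rw [← mul_assoc, ← ENNReal.ofReal_mul (by positivity)]
      _ = ENNReal.ofReal (R ^ ((n:ℝ) - Q) * 2 ^ n) * v1 *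
            ENNReal.ofReal (2 ^ ((n : ℝ) - Q)) ^ k := by
          rw [key, ENNReal.ofReal_mul (by positivity), ENNReal.ofReal_pow (by positivity)]
          ring
  calc ∫⁻ x in (closedBall x0 R)ᶜ, ENNReal.ofReal (dist x x0 ^ (-Q)) ∂volume
      ≤ ∫⁻ x in ⋃ k, A k, ENNReal.ofReal (dist x x0 ^ (-Q)) ∂volume :=
        lintegral_mono_set hcover
    _ ≤ ∑' k, ∫⁻ x in A k, ENNReal.ofReal (dist x x0 ^ (-Q)) ∂volume :=
        lintegral_iUnion_le _ _
    _ ≤ ∑' k, ENNReal.ofReal (R ^ ((n : ℝ) - Q) * 2 ^ n) * v1 *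
          ENNReal.ofReal (2 ^ ((n : ℝ) - Q)) ^ k := ENNReal.tsum_le_tsum hkey
    _ = ENNReal.ofReal (R ^ ((n : ℝ) - Q) * 2 ^ n) * v1 *
          ∑' k, ENNReal.ofReal (2 ^ ((n : ℝ) - Q)) ^ k := ENNReal.tsum_mul_left
    _ = _ := by rw [ENNReal.tsum_geometric]

/-- A `(p, ∞, s)`-atom associated with the ball `B(x₀, r)`. -/
def IsPInftyAtom (n : ℕ) (p : ℝ) (s : ℕ) (a : EuclideanSpace ℝ (Fin n) → ℝ)
    (x0 : EuclideanSpace ℝ (Fin n)) (r : ℝ) : Prop :=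
  0 < r ∧ Measurable a ∧
  (∀ x, x ∉ ball x0 r → a x = 0) ∧
  (∀ x, |a x| ≤ (volume (ball x0 r)).toReal ^ (-(1 / p))) ∧
  (∀ m : Fin n → ℕ, (∑ i, m i) ≤ s →
    ∫ x, a x * ∏ i, (x i) ^ (m i) = 0)

theorem stmt_16 (n : ℕ) (hn : 2 ≤ n) (p β : ℝ) (hp : 0 < p) (hp1 : p ≤ 1) (hβ : 0 < β)
    (hpn : (n : ℝ) < p * ((n : ℝ) + β)) (s : ℕ) (hs : (⌊(n : ℝ) * (1 / p - 1)⌋ : ℤ) ≤ s)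
    (T : (EuclideanSpace ℝ (Fin n) → ℝ) → EuclideanSpace ℝ (Fin n) → ℝ)
    (hTmeas : ∀ f, Measurable (T f))
    (hTsub : ∀ f g x, |T (f + g) x| ≤ |T f x| + |T g x|)
    (A : ℝ) (hA : 0 < A)
    (hTL4 : ∀ f, MemLp f 4 volume →
      eLpNorm (T f) 4 volume ≤ ENNReal.ofReal A * eLpNorm f 4 volume)
    (C : ℝ) (hC : 0 < C)
    (hdecay : ∀ a x0 r, IsPInftyAtom n p s a x0 r →
      ∀ x, x ∉ ball x0 (64 * r) →
        |T a x| ≤ C * (eLpNorm a ⊤ volume).toReal * r ^ ((n : ℝ) + β) *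
          (dist x x0) ^ (-((n : ℝ) + β))) :
    ∃ C' : ℝ, 0 < C' ∧ ∀ a x0 r, IsPInftyAtom n p s a x0 r →
      eLpNorm (T a) (ENNReal.ofReal p) volume ≤ ENNReal.ofReal C' := by
  haveI : Nonempty (Fin n) := ⟨⟨0, by omega⟩⟩
  haveI : Nontrivial (EuclideanSpace ℝ (Fin n)) := inferInstance
  set v1 := volume (ball (0 : EuclideanSpace ℝ (Fin n)) 1) with hv1def
  have hv10 : v1 ≠ 0 := (measure_ball_pos volume 0 one_pos).ne'
  have hv1top : v1 ≠ ⊤ := measure_ball_lt_top.ne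
  set Q := p * ((n : ℝ) + β) with hQdef
  have hQn : (n : ℝ) < Q := hpn
  have hnQ : (n : ℝ) - Q < 0 := by linarith
  have hw1 : (2 : ℝ) ^ ((n : ℝ) - Q) < 1 :=
    Real.rpow_lt_one_of_one_lt_of_neg one_lt_two hnQ
  set w := ENNReal.ofReal ((2 : ℝ) ^ ((n : ℝ) - Q)) with hwdef
  have hwlt : w < 1 := by
    rw [hwdef]; exact ENNReal.ofReal_lt_one.2 hw1
  set G := (1 - w)⁻¹ with hGdef
  have hGtop : G ≠ ⊤ := by
    rw [hGdef, ENNReal.inv_ne_top]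
    simp [tsub_eq_zero_iff_le, hwlt.not_ge]
  set K1 := (ENNReal.ofReal A) ^ p * (ENNReal.ofReal ((64 : ℝ) ^ n)) ^ (1 - p / 4) with hK1def
  set K2 := ENNReal.ofReal (C ^ p * v1.toReal⁻¹ * 64 ^ ((n : ℝ) - Q) * 2 ^ n) * v1 * G with hK2def
  have hK1top : K1 ≠ ⊤ := by
    rw [hK1def]
    exact ENNReal.mul_ne_top
      (ENNReal.rpow_ne_top_of_nonneg hp.le ENNReal.ofReal_ne_top)
      (ENNReal.rpow_ne_top_of_nonneg (by linarith) ENNReal.ofReal_ne_top)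
  have hK2top : K2 ≠ ⊤ := by
    rw [hK2def]
    exact ENNReal.mul_ne_top (ENNReal.mul_ne_top ENNReal.ofReal_ne_top hv1top) hGtop
  have hKtop : K1 + K2 ≠ ⊤ := ENNReal.add_ne_top.2 ⟨hK1top, hK2top⟩
  refine ⟨((K1 + K2) ^ (1 / p)).toReal + 1, by
    have := ENNReal.toReal_nonneg (a := (K1 + K2) ^ (1 / p)); linarith, ?_⟩
  intro a x0 r ha
  obtain ⟨hr, hameas, hsupp, habd, -⟩ := id ha
  set volB := volume (ball x0 r) with hvolBdef
  have hvolB_eq : volB = ENNReal.ofReal (r ^ n) * v1 := by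
    rw [hvolBdef, Measure.addHaar_ball volume x0 hr.le, finrank_euclideanSpace_fin, hv1def]
  have hvolB0 : volB ≠ 0 := (measure_ball_pos volume x0 hr).ne'
  have hvolBtop : volB ≠ ⊤ := measure_ball_lt_top.ne
  set M := volB.toReal ^ (-(1 / p)) with hMdef
  have hM0 : 0 ≤ M := Real.rpow_nonneg ENNReal.toReal_nonneg _
  have hMeq : ENNReal.ofReal M = volB ^ (-(1 / p)) := by
    rw [hMdef, ENNReal.toReal_rpow, ENNReal.ofReal_toReal (my_rpow_ne_top hvolB0 hvolBtop _)]
  -- pointwise bound for a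
  have ha_en : ∀ x, (‖a x‖₊ : ℝ≥0∞) ≤ ENNReal.ofReal M := fun x => by
    rw [← enorm_eq_nnnorm, Real.enorm_eq_ofReal_abs]
    exact ENNReal.ofReal_le_ofReal (habd x)
  -- L⁴ bound for a
  have hint4 : ∫⁻ x, (‖a x‖₊ : ℝ≥0∞) ^ (4 : ℝ) ∂volume ≤ (ENNReal.ofReal M) ^ (4 : ℝ) * volB := by
    have hptw : ∀ x, (‖a x‖₊ : ℝ≥0∞) ^ (4 : ℝ) ≤
        (ball x0 r).indicator (fun _ => (ENNReal.ofReal M) ^ (4 : ℝ)) x := by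
      intro x
      by_cases hx : x ∈ ball x0 r
      · rw [Set.indicator_of_mem hx]
        exact ENNReal.rpow_le_rpow (ha_en x) (by norm_num)
      · rw [Set.indicator_of_notMem hx, hsupp x hx]
        simp [ENNReal.zero_rpow_of_pos (by norm_num : (0:ℝ) < 4)]
    calc ∫⁻ x, (‖a x‖₊ : ℝ≥0∞) ^ (4 : ℝ) ∂volume
        ≤ ∫⁻ x, (ball x0 r).indicator (fun _ => (ENNReal.ofReal M) ^ (4 : ℝ)) x ∂volume :=
          lintegral_mono hptw
      _ = (ENNReal.ofReal M) ^ (4 : ℝ) * volB := by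
          rw [lintegral_indicator_const measurableSet_ball]
  have ha4 : eLpNorm a 4 volume ≤ ENNReal.ofReal M * volB ^ ((1 : ℝ) / 4) := by
    rw [eLpNorm_eq_lintegral_rpow_enorm_toReal (by norm_num) (by norm_num)]
    have h4 : ((4 : ℝ≥0∞)).toReal = (4 : ℝ) := by norm_num
    rw [h4]
    calc (∫⁻ x, (‖a x‖₊ : ℝ≥0∞) ^ (4 : ℝ) ∂volume) ^ ((1:ℝ) / 4)
        ≤ ((ENNReal.ofReal M) ^ (4 : ℝ) * volB) ^ ((1:ℝ) / 4) :=
          ENNReal.rpow_le_rpow hint4 (by norm_num)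
      _ = ENNReal.ofReal M * volB ^ ((1 : ℝ) / 4) := by
          rw [ENNReal.mul_rpow_of_nonneg _ _ (by norm_num : (0:ℝ) ≤ 1/4), ← ENNReal.rpow_mul]
          norm_num
  have hamem : MemLp a 4 volume := by
    refine ⟨hameas.aestronglyMeasurable, lt_of_le_of_lt ha4 ?_⟩
    exact ENNReal.mul_lt_top ENNReal.ofReal_lt_top
      (ENNReal.rpow_lt_top_of_nonneg (by norm_num) hvolBtop)
  have hTa4 : eLpNorm (T a) 4 volume ≤
      ENNReal.ofReal A * (ENNReal.ofReal M * volB ^ ((1 : ℝ) / 4)) :=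
    (hTL4 a hamem).trans (mul_le_mul_right ha4 _)
  set S := closedBall x0 (64 * r) with hSdef
  have hSmeas : MeasurableSet S := measurableSet_closedBall
  have hvolS : volume S = ENNReal.ofReal ((64 : ℝ) ^ n) * volB := by
    rw [hSdef, Measure.addHaar_closedBall volume x0 (by positivity), finrank_euclideanSpace_fin,
      hvolB_eq, mul_pow, ENNReal.ofReal_mul (by positivity), mul_assoc, ← hv1def]
  set f : EuclideanSpace ℝ (Fin n) → ℝ≥0∞ := fun x => (‖T a x‖₊ : ℝ≥0∞) ^ p with hfdef
  have hfmeas : Measurable f := (hTmeas a).nnnorm.coe_nnreal_ennreal.pow_const _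
  have hsnorm : eLpNorm (T a) (ENNReal.ofReal p) volume = (∫⁻ x, f x ∂volume) ^ (1 / p) := by
    rw [eLpNorm_eq_lintegral_rpow_enorm_toReal (by simp [ENNReal.ofReal_eq_zero, hp.not_ge])
      ENNReal.ofReal_ne_top, ENNReal.toReal_ofReal hp.le]
    rfl
  have hsplit : ∫⁻ x, f x ∂volume = (∫⁻ x in S, f x ∂volume) + ∫⁻ x in Sᶜ, f x ∂volume :=
    (lintegral_add_compl f hSmeas).symm
  -- Part 1 : inner ball
  have hpart1 : ∫⁻ x in S, f x ∂volume ≤ K1 := by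
    have h4p : (1 : ℝ) < 4 / p := by rw [lt_div_iff₀ hp]; linarith
    have hconj : (4 / p).HolderConjugate ((4 / p).conjExponent) :=
      Real.HolderConjugate.conjExponent h4p
    have hq : 1 / ((4 / p).conjExponent) = 1 - p / 4 := by
      have h1 : p ≠ 0 := hp.ne'
      have h2 : 4 / p - 1 ≠ 0 := by linarith
      rw [Real.conjExponent]
      field_simp
    have hHold := ENNReal.lintegral_mul_le_Lp_mul_Lq (volume.restrict S) hconj
      hfmeas.aemeasurable (aemeasurable_const (b := (1 : ℝ≥0∞)))
    simp only [Pi.mul_apply, mul_one, ENNReal.one_rpow, lintegral_one,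
      Measure.restrict_apply_univ, one_div_div] at hHold
    rw [hq] at hHold
    have hf4 : ∀ x, f x ^ (4 / p) = (‖T a x‖₊ : ℝ≥0∞) ^ (4 : ℝ) := by
      intro x
      rw [hfdef, ← ENNReal.rpow_mul]
      congr 1
      field_simp
    have hL4eq : ∫⁻ x, (‖T a x‖₊ : ℝ≥0∞) ^ (4 : ℝ) ∂volume
        = (eLpNorm (T a) 4 volume) ^ (4 : ℝ) := by
      rw [eLpNorm_eq_lintegral_rpow_enorm_toReal (by norm_num) (by norm_num)]
      have h4 : ((4 : ℝ≥0∞)).toReal = (4 : ℝ) := by norm_num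
      rw [h4, ← ENNReal.rpow_mul]
      norm_num
      rfl
    have hstep1 : (∫⁻ x in S, f x ^ (4 / p) ∂volume) ^ (p / 4)
        ≤ (eLpNorm (T a) 4 volume) ^ p := by
      have hmono : ∫⁻ x in S, f x ^ (4 / p) ∂volume ≤ (eLpNorm (T a) 4 volume) ^ (4 : ℝ) := by
        rw [← hL4eq]
        simp_rw [hf4]
        exact (lintegral_mono_set (Set.subset_univ S)).trans (by rw [Measure.restrict_univ])
      calc (∫⁻ x in S, f x ^ (4 / p) ∂volume) ^ (p / 4)
          ≤ ((eLpNorm (T a) 4 volume) ^ (4 : ℝ)) ^ (p / 4) :=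
            ENNReal.rpow_le_rpow hmono (by positivity)
        _ = (eLpNorm (T a) 4 volume) ^ p := by
            rw [← ENNReal.rpow_mul]
            congr 1
            field_simp
    have hTap : (eLpNorm (T a) 4 volume) ^ p
        ≤ (ENNReal.ofReal A * (ENNReal.ofReal M * volB ^ ((1 : ℝ) / 4))) ^ p :=
      ENNReal.rpow_le_rpow hTa4 hp.le
    have hfinal : (ENNReal.ofReal A * (ENNReal.ofReal M * volB ^ ((1 : ℝ) / 4))) ^ p *
        (volume S) ^ (1 - p / 4) = K1 := by
      rw [hvolS, hMeq, ← ENNReal.rpow_add _ _ hvolB0 hvolBtop,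
        ENNReal.mul_rpow_of_nonneg _ _ hp.le,
        ENNReal.mul_rpow_of_nonneg _ _ (by linarith : (0:ℝ) ≤ 1 - p / 4),
        ← ENNReal.rpow_mul, hK1def]
      have hcancel : volB ^ ((-(1 / p) + 1 / 4) * p) * volB ^ (1 - p / 4) = 1 := by
        rw [← ENNReal.rpow_add _ _ hvolB0 hvolBtop]
        have : (-(1 / p) + 1 / 4) * p + (1 - p / 4) = 0 := by field_simp; ring
        rw [this, ENNReal.rpow_zero]
      calc (ENNReal.ofReal A) ^ p * volB ^ ((-(1 / p) + 1 / 4) * p) *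
            ((ENNReal.ofReal ((64:ℝ) ^ n)) ^ (1 - p / 4) * volB ^ (1 - p / 4))
          = (ENNReal.ofReal A) ^ p * (ENNReal.ofReal ((64:ℝ) ^ n)) ^ (1 - p / 4) *
            (volB ^ ((-(1 / p) + 1 / 4) * p) * volB ^ (1 - p / 4)) := by ring
        _ = _ := by rw [hcancel, mul_one]
    calc ∫⁻ x in S, f x ∂volume
        ≤ (∫⁻ x in S, f x ^ (4 / p) ∂volume) ^ (p / 4) * (volume S) ^ (1 - p / 4) := hHold
      _ ≤ (ENNReal.ofReal A * (ENNReal.ofReal M * volB ^ ((1 : ℝ) / 4))) ^ p *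
            (volume S) ^ (1 - p / 4) :=
          mul_le_mul_left (hstep1.trans hTap) _
      _ = K1 := hfinal
  -- Part 2 : outer region
  have hpart2 : ∫⁻ x in Sᶜ, f x ∂volume ≤ K2 := by
    set D := C * M * r ^ ((n : ℝ) + β) with hDdef
    have hD0 : 0 ≤ D := by
      apply mul_nonneg (mul_nonneg hC.le hM0) (Real.rpow_nonneg hr.le _)
    have hNle : (eLpNorm a ⊤ volume).toReal ≤ M := by
      have h1 : eLpNorm a ⊤ volume ≤ ENNReal.ofReal M := by
        rw [eLpNorm_exponent_top]
        apply eLpNormEssSup_le_of_ae_bound (C := M)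
        filter_upwards with x
        simpa using habd x
      exact ENNReal.toReal_le_of_le_ofReal hM0 h1
    have hptw : ∀ x ∈ Sᶜ, f x ≤
        ENNReal.ofReal (D ^ p) * ENNReal.ofReal (dist x x0 ^ (-Q)) := by
      intro x hx
      have hxball : x ∉ ball x0 (64 * r) := fun h => hx (ball_subset_closedBall h)
      have h1 : |T a x| ≤ D * dist x x0 ^ (-((n : ℝ) + β)) := by
        have hdx := hdecay a x0 r ha x hxball
        have hdn : (0:ℝ) ≤ dist x x0 ^ (-((n : ℝ) + β)) := Real.rpow_nonneg dist_nonneg _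
        calc |T a x| ≤ C * (eLpNorm a ⊤ volume).toReal * r ^ ((n : ℝ) + β) *
              dist x x0 ^ (-((n : ℝ) + β)) := hdx
          _ ≤ D * dist x x0 ^ (-((n : ℝ) + β)) := by
              apply mul_le_mul_of_nonneg_right ?_ hdn
              rw [hDdef]
              have hrp : (0:ℝ) ≤ r ^ ((n : ℝ) + β) := Real.rpow_nonneg hr.le _
              exact mul_le_mul_of_nonneg_right
                (mul_le_mul_of_nonneg_left hNle hC.le) hrp
      have h2 : f x ≤ ENNReal.ofReal (D * dist x x0 ^ (-((n : ℝ) + β))) ^ p := by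
        rw [hfdef]
        simp only [← enorm_eq_nnnorm, Real.enorm_eq_ofReal_abs]
        exact ENNReal.rpow_le_rpow (ENNReal.ofReal_le_ofReal h1) hp.le
      refine h2.trans (le_of_eq ?_)
      rw [ENNReal.ofReal_rpow_of_nonneg (by positivity) hp.le,
        Real.mul_rpow hD0 (Real.rpow_nonneg dist_nonneg _),
        ← Real.rpow_mul dist_nonneg,
        show (-((n : ℝ) + β)) * p = -Q by rw [hQdef]; ring,
        ENNReal.ofReal_mul (Real.rpow_nonneg hD0 p)]
    have htail := tail_bound hn x0 (R := 64 * r) (Q := Q) (by positivity) hQn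
    have hDp : D ^ p ≤ C ^ p * volB.toReal⁻¹ * r ^ Q := by
      rw [hDdef, Real.mul_rpow (mul_nonneg hC.le hM0) (Real.rpow_nonneg hr.le _),
        Real.mul_rpow hC.le hM0]
      have h1 : (r ^ ((n : ℝ) + β)) ^ p = r ^ Q := by
        rw [← Real.rpow_mul hr.le]
        congr 1
        rw [hQdef]; ring
      have h2 : M ^ p = volB.toReal⁻¹ := by
        rw [hMdef, ← Real.rpow_mul ENNReal.toReal_nonneg,
          show -(1 / p) * p = -1 by field_simp, Real.rpow_neg_one]
      rw [h1, h2]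
    calc ∫⁻ x in Sᶜ, f x ∂volume
        ≤ ∫⁻ x in Sᶜ, ENNReal.ofReal (D ^ p) * ENNReal.ofReal (dist x x0 ^ (-Q)) ∂volume :=
          setLIntegral_mono' hSmeas.compl hptw
      _ = ENNReal.ofReal (D ^ p) * ∫⁻ x in Sᶜ, ENNReal.ofReal (dist x x0 ^ (-Q)) ∂volume :=
          lintegral_const_mul' _ _ ENNReal.ofReal_ne_top
      _ ≤ ENNReal.ofReal (D ^ p) *
            (ENNReal.ofReal ((64 * r) ^ ((n : ℝ) - Q) * 2 ^ n) * v1 * G) :=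
          mul_le_mul_right htail _
      _ ≤ K2 := by
          rw [hK2def]
          have hXle : D ^ p * ((64 * r) ^ ((n : ℝ) - Q) * 2 ^ n)
              ≤ C ^ p * v1.toReal⁻¹ * 64 ^ ((n : ℝ) - Q) * 2 ^ n := by
            have h64 : ((64:ℝ) * r) ^ ((n:ℝ) - Q) = 64 ^ ((n:ℝ) - Q) * r ^ ((n:ℝ) - Q) :=
              Real.mul_rpow (by norm_num) hr.le
            have htB : volB.toReal = r ^ n * v1.toReal := by
              rw [hvolB_eq, ENNReal.toReal_mul, ENNReal.toReal_ofReal (by positivity)]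
            have hrQ : r ^ Q * r ^ ((n:ℝ) - Q) = r ^ n := by
              rw [← Real.rpow_add hr, ← Real.rpow_natCast r n]
              congr 1; ring
            calc D ^ p * ((64 * r) ^ ((n:ℝ) - Q) * 2 ^ n)
                ≤ (C ^ p * volB.toReal⁻¹ * r ^ Q) * ((64 * r) ^ ((n:ℝ) - Q) * 2 ^ n) := by
                  apply mul_le_mul_of_nonneg_right hDp
                  have := Real.rpow_nonneg (mul_nonneg (by norm_num : (0:ℝ) ≤ 64) hr.le) ((n:ℝ) - Q)
                  positivity
              _ = C ^ p * v1.toReal⁻¹ * 64 ^ ((n:ℝ) - Q) * 2 ^ n *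
                    ((r ^ n)⁻¹ * (r ^ Q * r ^ ((n:ℝ) - Q))) := by
                  rw [htB, h64, mul_inv]; ring
              _ = _ := by rw [hrQ, inv_mul_cancel₀ (by positivity), mul_one]
          calc ENNReal.ofReal (D ^ p) * (ENNReal.ofReal ((64 * r) ^ ((n:ℝ) - Q) * 2 ^ n) * v1 * G)
              = ENNReal.ofReal (D ^ p * ((64 * r) ^ ((n:ℝ) - Q) * 2 ^ n)) * v1 * G := by
                rw [ENNReal.ofReal_mul (Real.rpow_nonneg hD0 p)]; ring
            _ ≤ ENNReal.ofReal (C ^ p * v1.toReal⁻¹ * 64 ^ ((n:ℝ) - Q) * 2 ^ n) * v1 * G :=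
                mul_le_mul_left (mul_le_mul_left (ENNReal.ofReal_le_ofReal hXle) _) _
  -- conclusion
  rw [hsnorm]
  have hI : ∫⁻ x, f x ∂volume ≤ K1 + K2 := by
    rw [hsplit]; exact add_le_add hpart1 hpart2
  calc (∫⁻ x, f x ∂volume) ^ (1 / p) ≤ (K1 + K2) ^ (1 / p) :=
        ENNReal.rpow_le_rpow hI (by positivity)
    _ = ENNReal.ofReal (((K1 + K2) ^ (1 / p)).toReal) :=
        (ENNReal.ofReal_toReal (ENNReal.rpow_ne_top_of_nonneg (by positivity) hKtop)).symm
    _ ≤ ENNReal.ofReal (((K1 + K2) ^ (1 / p)).toReal + 1) :=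
        ENNReal.ofReal_le_ofReal (by linarith)
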